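/- Let k ≥ 2, let (S,*) be a ℤ₂-irreducible k-cycle, and let X ⊆ V(S) be an inclusion-minimal *-invariant vertex separator of G(S) with |X| ≤ 2k. Then either S = T ⊔ T* (the multiset sum) for some simplicial k-circuit T with V(T) ∩ V(T*) = X, or |X| = 2k and the subgraph of G(S) induced by X is isomorphic to G(B_{k−1}). -/

import Mathlib

open Matrix

/-! ### Frameworks and infinitesimal rigidity -/

/-- An infinitesimal motion of the framework given by the graph `G` restricted to the
vertex set `W`, realised by `p` in `ℝ^d`. -/
def IsMotion {V : Type*} (d : ℕ) (G : SimpleGraph V) (W : Set V)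
    (p q : V → Fin d → ℝ) : Prop :=
  ∀ u ∈ W, ∀ v ∈ W, G.Adj u v → (p u - p v) ⬝ᵥ (q u - q v) = 0

/-- A trivial infinitesimal motion: `q = S ∘ p + c` on `W` for a skew-symmetric `S`. -/
def IsTrivialMotion {V : Type*} (d : ℕ) (W : Set V) (p q : V → Fin d → ℝ) : Prop :=
  ∃ (S : Matrix (Fin d) (Fin d) ℝ) (c : Fin d → ℝ), Sᵀ = -S ∧ ∀ u ∈ W, q u = S *ᵥ p u + c

/-- The framework on vertex set `W` with edges those of `G` inside `W`, realised by `p`,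
is infinitesimally rigid. -/
def IsInfRigid {V : Type*} (d : ℕ) (G : SimpleGraph V) (W : Set V)
    (p : V → Fin d → ℝ) : Prop :=
  ∀ q : V → Fin d → ℝ, IsMotion d G W p q → IsTrivialMotion d W p q

/-- `σ` is a free involution on `X`, i.e. a vertex pairing on `X`. -/
structure IsVertexPairing {V : Type*} (X : Set V) (σ : V → V) : Prop where
  mapsTo : ∀ x ∈ X, σ x ∈ X
  invol : ∀ x ∈ X, σ (σ x) = x
  free : ∀ x ∈ X, σ x ≠ x

/-- A non-adjacent vertex pairing of the graph `G`. -/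
def IsNonAdjPairing {V : Type*} (G : SimpleGraph V) (X : Set V) (σ : V → V) : Prop :=
  IsVertexPairing X σ ∧ ∀ x ∈ X, ¬ G.Adj x (σ x)

/-- `(G, σ)` is a `ℤ₂`-symmetric graph: `σ` is a free involutive automorphism of `G`
with `u (σ u)` never an edge. -/
def IsZ2SymGraph {V : Type*} (G : SimpleGraph V) (σ : V → V) : Prop :=
  (∀ x, σ (σ x) = x) ∧ (∀ x, σ x ≠ x) ∧ (∀ u v, G.Adj u v ↔ G.Adj (σ u) (σ v)) ∧
    ∀ x, ¬ G.Adj x (σ x)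

/-- `γ` generates a point group of `ℝ^d` of order two: it is orthogonal, an involution
and not the identity. -/
def IsPointGroupInvolution {d : ℕ} (γ : Matrix (Fin d) (Fin d) ℝ) : Prop :=
  γᵀ * γ = 1 ∧ γ * γ = 1 ∧ γ ≠ 1

/-- The diagonal matrix `I_{t,d}` whose first `t` diagonal entries are `1` and whose
remaining `d - t` diagonal entries are `-1`; it generates the point group `Γ_{t,d}`. -/
def Itd (t d : ℕ) : Matrix (Fin d) (Fin d) ℝ :=
  Matrix.diagonal fun i => if (i : ℕ) < t then (1 : ℝ) else -1

/-- `p` is `Γ`-symmetric with respect to the vertex pairing `σ : X → X`, where `Γ` is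
generated by `γ`. -/
def IsGammaSym {V : Type*} {d : ℕ} (X : Set V) (σ : V → V)
    (γ : Matrix (Fin d) (Fin d) ℝ) (p : V → Fin d → ℝ) : Prop :=
  ∀ x ∈ X, p (σ x) = γ *ᵥ p x

/-- `(G|_W, σ)` is `Γ`-rigid in `ℝ^d`, where `Γ` is the point group generated by `γ`:
some `Γ`-symmetric realisation is infinitesimally rigid. -/
def GammaRigid {V : Type*} (d : ℕ) (G : SimpleGraph V) (W X : Set V) (σ : V → V)
    (γ : Matrix (Fin d) (Fin d) ℝ) : Prop :=
  ∃ p : V → Fin d → ℝ, IsGammaSym X σ γ p ∧ IsInfRigid d G W p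

/-- The set `X_W = (X ∩ W) ∩ (X ∩ W)*`. -/
def pairedPart {V : Type*} (X : Set V) (σ : V → V) (W : Set V) : Set V :=
  (X ∩ W) ∩ (σ '' (X ∩ W))

/-- The simple graph `G/uv` obtained from `G` by contracting `v` onto `u`. -/
def contractEdge {V : Type*} (G : SimpleGraph V) (u v : V) : SimpleGraph V :=
  SimpleGraph.fromRel fun a b =>
    a ≠ v ∧ b ≠ v ∧ (G.Adj a b ∨ (a = u ∧ G.Adj v b) ∨ (b = u ∧ G.Adj a v))

/-- The row of the rigidity matrix indexed by an (unordered) edge `e`, viewed as the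
linear functional `q ↦ (p u - p v) ⬝ᵥ (q u - q v)`. -/
def rigidityRow {V : Type*} (d : ℕ) (p : V → Fin d → ℝ) (e : Sym2 V)
    (q : V → Fin d → ℝ) : ℝ :=
  Sym2.lift ⟨fun u v => (p u - p v) ⬝ᵥ (q u - q v), fun u v => by
    show (p u - p v) ⬝ᵥ (q u - q v) = (p v - p u) ⬝ᵥ (q v - q u)
    rw [show p u - p v = -(p v - p u) from (neg_sub _ _).symm,
      show q u - q v = -(q v - q u) from (neg_sub _ _).symm,
      _root_.neg_dotProduct, _root_.dotProduct_neg, neg_neg]⟩ e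

/-- The rigidity matrix `R(G,p)` is row-independent. -/
def RowIndependent {V : Type*} (d : ℕ) (G : SimpleGraph V) (p : V → Fin d → ℝ) : Prop :=
  LinearIndependent ℝ fun e : G.edgeSet => rigidityRow d p e.1

/-- The graph obtained from `G` by splitting `u'` from `u` along `C₁` (deleting `D₁`)
and then splitting `v'` from `v` along `C₂` (deleting `D₂`).  The new vertices are
`u' = Sum.inr 0` and `v' = Sum.inr 1`. -/
def doubleSplit {V : Type*} (G : SimpleGraph V) (u v : V) (C₁ D₁ C₂ D₂ : Set V) :
    SimpleGraph (V ⊕ Fin 2) :=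
  SimpleGraph.fromRel fun a b =>
    (∃ s t : V, a = Sum.inl s ∧ b = Sum.inl t ∧ G.Adj s t ∧
        ¬(s = u ∧ t ∈ D₁) ∧ ¬(t = u ∧ s ∈ D₁) ∧ ¬(s = v ∧ t ∈ D₂) ∧ ¬(t = v ∧ s ∈ D₂)) ∨
    (∃ z : V, a = Sum.inr 0 ∧ b = Sum.inl z ∧ (z ∈ C₁ ∪ D₁ ∨ z = u)) ∨
    (∃ z : V, a = Sum.inr 1 ∧ b = Sum.inl z ∧ (z ∈ C₂ ∪ D₂ ∨ z = v))

/-! ### Simplicial multicomplexes -/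

/-- The vertex set `V(S)` of a simplicial multicomplex. -/
def complexVerts {V : Type*} [DecidableEq V] (S : Multiset (Finset V)) : Finset V :=
  S.toFinset.sup id

/-- The edge set `E(S)`: all 2-element subsets of facets. -/
def complexEdges {V : Type*} [DecidableEq V] (S : Multiset (Finset V)) :
    Finset (Finset V) :=
  S.toFinset.biUnion fun F => Finset.powersetCard 2 F

/-- Adjacency in the graph `G(S)` of a simplicial multicomplex. -/
def complexAdj {V : Type*} (S : Multiset (Finset V)) (a b : V) : Prop :=
  a ≠ b ∧ ∃ F ∈ S, a ∈ F ∧ b ∈ F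

/-- The graph `G(S)` of a simplicial multicomplex. -/
def complexGraph {V : Type*} (S : Multiset (Finset V)) : SimpleGraph V :=
  SimpleGraph.fromRel fun a b => ∃ F ∈ S, a ∈ F ∧ b ∈ F

/-- A simplicial `k`-multicomplex: a multiset of `(k+1)`-element sets. -/
def IsMultiComplex {V : Type*} (k : ℕ) (S : Multiset (Finset V)) : Prop :=
  ∀ F ∈ S, F.card = k + 1

/-- `F` belongs to the boundary `∂S`: it is a `k`-set contained in an odd number of
facets of `S`, counted with multiplicity. -/
def inBoundary {V : Type*} [DecidableEq V] (k : ℕ) (S : Multiset (Finset V))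
    (F : Finset V) : Prop :=
  F.card = k ∧ (S.countP fun U => F ⊆ U) % 2 = 1

instance {V : Type*} [DecidableEq V] (k : ℕ) (S : Multiset (Finset V)) (F : Finset V) :
    Decidable (inBoundary k S F) :=
  inferInstanceAs (Decidable (_ ∧ _))

/-- A simplicial `k`-cycle: a `k`-multicomplex with empty boundary. -/
def IsSimplicialCycle {V : Type*} [DecidableEq V] (k : ℕ)
    (S : Multiset (Finset V)) : Prop :=
  IsMultiComplex k S ∧ ∀ F : Finset V, ¬ inBoundary k S F

/-- A simplicial `k`-circuit: a nonempty simplicial `k`-cycle, no nonempty proper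
sub-multiset of which is a simplicial `k`-cycle. -/
def IsSimplicialCircuit {V : Type*} [DecidableEq V] (k : ℕ)
    (S : Multiset (Finset V)) : Prop :=
  IsSimplicialCycle k S ∧ S ≠ 0 ∧
    ∀ T : Multiset (Finset V), T ≤ S → T ≠ 0 → T ≠ S → ¬ IsSimplicialCycle k T

/-- A trivial simplicial `k`-circuit: two copies of a single `(k+1)`-set. -/
def IsTrivialCircuit {V : Type*} (S : Multiset (Finset V)) : Prop :=
  ∃ F : Finset V, S = {F, F}

/-- The image multiset `T* = {F* : F ∈ T}` of a multicomplex under a vertex map. -/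
def starM {V W : Type*} [DecidableEq W] (f : V → W) (T : Multiset (Finset V)) :
    Multiset (Finset W) :=
  T.map (Finset.image f)

/-- `σ` is a free simplicial involution of the multicomplex `S`. -/
def IsFreeSimplicialInvolution {V : Type*} [DecidableEq V] (S : Multiset (Finset V))
    (σ : V → V) : Prop :=
  (∀ v ∈ complexVerts S, σ (σ v) = v) ∧ starM σ S = S ∧
    ∀ F : Finset V, F.Nonempty → (∃ U ∈ S, F ⊆ U) → F.image σ ≠ F

/-- A `ℤ₂`-symmetric `k`-cycle. -/
def IsZ2SymCycle {V : Type*} [DecidableEq V] (k : ℕ) (S : Multiset (Finset V))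
    (σ : V → V) : Prop :=
  IsSimplicialCycle k S ∧ IsFreeSimplicialInvolution S σ

/-- A `ℤ₂`-irreducible `k`-cycle: a nonempty `ℤ₂`-symmetric `k`-cycle, no nonempty
proper `σ`-invariant sub-multiset of which is a simplicial `k`-cycle. -/
def IsZ2IrreducibleCycle {V : Type*} [DecidableEq V] (k : ℕ) (S : Multiset (Finset V))
    (σ : V → V) : Prop :=
  IsZ2SymCycle k S σ ∧ S ≠ 0 ∧
    ∀ T : Multiset (Finset V), T ≤ S → T ≠ 0 → T ≠ S → starM σ T = T →
      ¬ IsSimplicialCycle k T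

/-- A trivial `ℤ₂`-irreducible `k`-cycle: two vertex-disjoint trivial simplicial
`k`-circuits interchanged by `σ`. -/
def IsTrivialZ2Irreducible {V : Type*} [DecidableEq V] (S : Multiset (Finset V))
    (σ : V → V) : Prop :=
  ∃ F : Finset V, S = {F, F, F.image σ, F.image σ} ∧ Disjoint F (F.image σ)

/-- The contraction `S/uv` of the multicomplex `S` (contracting `v` onto `u`). -/
def contractC {V : Type*} [DecidableEq V] (S : Multiset (Finset V)) (u v : V) :
    Multiset (Finset V) :=
  (S.filter fun U => ¬(u ∈ U ∧ v ∈ U)).map fun U =>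
    if v ∈ U then insert u (U.erase v) else U

/-- The canonical bijection `γ` from `Ast({x,y}) ∩ Ast({x*,y*})` to `(S/xy)/x*y*`,
as a map on facets. -/
def gammaFun {V : Type*} [DecidableEq V] (x y : V) (σ : V → V) (U : Finset V) :
    Finset V :=
  if y ∈ U then insert x (U.erase y)
  else if σ y ∈ U then insert (σ x) (U.erase (σ y)) else U

/-- `Ast({x,y}) ∩ Ast({x*,y*})`: the facets of `S` containing neither `{x,y}` nor
`{x*,y*}`. -/
def doubleAst {V : Type*} [DecidableEq V] (S : Multiset (Finset V)) (x y : V)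
    (σ : V → V) : Multiset (Finset V) :=
  S.filter fun U => ¬(x ∈ U ∧ y ∈ U) ∧ ¬(σ x ∈ U ∧ σ y ∈ U)

/-- `Sᵢ† = {K ⊆ V(Sᵢ) : |K| = k+1, {x,y} ⊆ K, K - x ∈ ∂Sᵢ, K - y ∈ ∂Sᵢ}`. -/
def fogDagger {V : Type*} [DecidableEq V] (k : ℕ) (Si : Multiset (Finset V))
    (x y : V) : Finset (Finset V) :=
  (complexVerts Si).powerset.filter fun K =>
    K.card = k + 1 ∧ x ∈ K ∧ y ∈ K ∧
      inBoundary k Si (K.erase x) ∧ inBoundary k Si (K.erase y)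

/-- `Sᵢ⁺ = Sᵢ ∪ Sᵢ† ∪ (Sᵢ†)*`. -/
def fogPlus {V : Type*} [DecidableEq V] (k : ℕ) (Si : Multiset (Finset V)) (x y : V)
    (σ : V → V) : Multiset (Finset V) :=
  Si ∪ (fogDagger k Si x y).val ∪ ((fogDagger k Si x y).image (Finset.image σ)).val

/-- The boundary complex `B_k` of the `(k+1)`-dimensional crosspolytope: its facets are
the transversals of the pairs `{(i,0),(i,1)}`. -/
def crossComplex (k : ℕ) : Multiset (Finset (Fin (k + 1) × Fin 2)) :=
  (Finset.univ : Finset (Fin (k + 1) → Fin 2)).val.map fun ε =>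
    Finset.univ.image fun i => (i, ε i)

/-- The graph `G(B_k)` of the `(k+1)`-dimensional crosspolytope: all pairs of vertices
are adjacent except antipodal ones. -/
def crossGraph (k : ℕ) : SimpleGraph (Fin (k + 1) × Fin 2) :=
  SimpleGraph.fromRel fun a b => a.1 ≠ b.1

/-- The antipodal vertex pairing of `G(B_k)`. -/
def antipode (k : ℕ) : Fin (k + 1) × Fin 2 → Fin (k + 1) × Fin 2 := fun a => (a.1, a.2 + 1)

/-- A `k`-pseudomanifold: a simplicial `k`-complex in which every `(k-1)`-face lies in
exactly two facets, and which is strongly connected. -/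
def IsPseudomanifold {V : Type*} [DecidableEq V] (k : ℕ)
    (S : Multiset (Finset V)) : Prop :=
  S.Nodup ∧ (∀ F ∈ S, F.card = k + 1) ∧
    (∀ F : Finset V, F.card = k → (∃ U ∈ S, F ⊆ U) →
      (S.countP fun U => F ⊆ U) = 2) ∧
    ∀ U ∈ S, ∀ W ∈ S,
      Relation.ReflTransGen (fun A B => A ∈ S ∧ B ∈ S ∧ (A ∩ B).card = k) U W

/-! ### Auxiliary lemmas for Statement 11 -/

section Stmt11Aux

variable {V : Type*} [DecidableEq V]

set_option linter.unusedSectionVars false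

lemma mem_complexVerts {S : Multiset (Finset V)} {v : V} :
    v ∈ complexVerts S ↔ ∃ F ∈ S, v ∈ F := by
  simp [complexVerts, Finset.mem_sup]

lemma complexGraph_adj {S : Multiset (Finset V)} {u v : V} :
    (complexGraph S).Adj u v ↔ u ≠ v ∧ ∃ F ∈ S, u ∈ F ∧ v ∈ F := by
  constructor
  · rintro ⟨hne, ⟨F, hF, h1, h2⟩ | ⟨F, hF, h1, h2⟩⟩ <;> exact ⟨hne, F, hF, by tauto⟩
  · rintro ⟨hne, F, hF, h1, h2⟩; exact ⟨hne, Or.inl ⟨F, hF, h1, h2⟩⟩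

/-- Walk relation inside a vertex set `W` of the graph of `S`. -/
def cgStep (S : Multiset (Finset V)) (W : Set V) (u v : V) : Prop :=
  u ∈ W ∧ v ∈ W ∧ (complexGraph S).Adj u v

/-- Reachability inside a vertex set `W` of the graph of `S`. -/
def cgRel (S : Multiset (Finset V)) (W : Set V) : V → V → Prop :=
  Relation.ReflTransGen (cgStep S W)

lemma cgRel.refl {S : Multiset (Finset V)} {W : Set V} (u : V) : cgRel S W u u :=
  Relation.ReflTransGen.refl

lemma cgRel.trans {S : Multiset (Finset V)} {W : Set V} {u v w : V}
    (h1 : cgRel S W u v) (h2 : cgRel S W v w) : cgRel S W u w :=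
  Relation.ReflTransGen.trans h1 h2

lemma cgRel.symm {S : Multiset (Finset V)} {W : Set V} {u v : V}
    (h : cgRel S W u v) : cgRel S W v u := by
  refine @Std.Symm.symm _ _ (@Relation.ReflTransGen.stdSymm _ _ ⟨?_⟩) _ _ h
  rintro a b ⟨ha, hb, hab⟩
  exact ⟨hb, ha, hab.symm⟩

lemma cgRel_reachable {S : Multiset (Finset V)} {W : Set V} {u v : V}
    (h : cgRel S W u v) :
    ∀ (hu : u ∈ W) (hv : v ∈ W),
      ((complexGraph S).induce W).Reachable ⟨u, hu⟩ ⟨v, hv⟩ := by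
  induction h with
  | refl => intro hu hv; rfl
  | tail h1 h2 ih =>
    intro hu hv
    exact (ih hu h2.1).trans (SimpleGraph.Adj.reachable h2.2.2)

lemma connected_cgRel {S : Multiset (Finset V)} {W : Set V}
    (h : ((complexGraph S).induce W).Connected) {u v : V}
    (hu : u ∈ W) (hv : v ∈ W) : cgRel S W u v := by
  have hr := h.preconnected ⟨u, hu⟩ ⟨v, hv⟩
  rw [SimpleGraph.reachable_iff_reflTransGen] at hr
  have := Relation.ReflTransGen.lift (r := ((complexGraph S).induce W).Adj)
    (p := cgStep S W) (Subtype.val) (fun a b hab => ⟨a.2, b.2, hab⟩) _ _ hr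
  exact this

lemma not_connected_exists {S : Multiset (Finset V)} {W : Set V}
    (hW : W.Nonempty) (h : ¬ ((complexGraph S).induce W).Connected) :
    ∃ u ∈ W, ∃ v ∈ W, ¬ cgRel S W u v := by
  by_contra hc
  push_neg at hc
  refine h ((SimpleGraph.connected_iff _).2 ⟨fun a b => ?_, ⟨⟨hW.choose, hW.choose_spec⟩⟩⟩)
  obtain ⟨a, ha⟩ := a; obtain ⟨b, hb⟩ := b
  exact cgRel_reachable (hc a ha b hb) ha hb

/-- Double counting: summing, over all possible extra vertices `w`, the number of
facets of `T` containing `insert w J` yields an even number. -/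
lemma parity_sum {A J : Finset V} {T : Multiset (Finset V)}
    (hT : ∀ U ∈ T, U ⊆ A ∧ (J ⊆ U → (U \ J).card = 2)) :
    (∑ w ∈ A \ J, T.countP (fun U => insert w J ⊆ U)) % 2 = 0 := by
  classical
  induction T using Multiset.induction with
  | empty => simp
  | cons U T ih =>
    have hU := hT U (Multiset.mem_cons_self U T)
    have ih' := ih (fun U' hU' => hT U' (Multiset.mem_cons_of_mem hU'))
    have hsum : (∑ w ∈ A \ J, if insert w J ⊆ U then 1 else 0) =
        (if J ⊆ U then 2 else 0) := by
      have hfil : (A \ J).filter (fun w => insert w J ⊆ U) =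
          (if J ⊆ U then U \ J else ∅) := by
        ext w
        split
        · next hJU =>
          simp only [Finset.mem_filter, Finset.mem_sdiff, Finset.insert_subset_iff]
          constructor
          · rintro ⟨⟨-, hwJ⟩, hwU, -⟩; exact ⟨hwU, hwJ⟩
          · rintro ⟨hwU, hwJ⟩; exact ⟨⟨hU.1 hwU, hwJ⟩, hwU, hJU⟩
        · next hJU =>
          simp only [Finset.mem_filter, Finset.mem_sdiff, Finset.insert_subset_iff,
            Finset.notMem_empty, iff_false]
          rintro ⟨-, -, hJU'⟩; exact hJU hJU'
      rw [← Finset.card_filter, hfil]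
      split
      · next hJU => rw [hU.2 hJU]
      · simp
    rw [show (∑ w ∈ A \ J, (U ::ₘ T).countP (fun U' => insert w J ⊆ U'))
        = (∑ w ∈ A \ J, T.countP (fun U' => insert w J ⊆ U'))
          + (∑ w ∈ A \ J, if insert w J ⊆ U then 1 else 0) by
      rw [← Finset.sum_add_distrib]
      refine Finset.sum_congr rfl fun w _ => ?_
      rw [Multiset.countP_cons]]
    rw [hsum]
    split <;> omega

/-- If a sum is even, the number of odd summands is even. -/
lemma card_odd_even {A : Finset V} {f : V → ℕ}
    (h : (∑ w ∈ A, f w) % 2 = 0) :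
    (A.filter fun w => f w % 2 = 1).card % 2 = 0 := by
  classical
  rw [Finset.sum_nat_mod] at h
  rw [← Finset.sum_filter_add_sum_filter_not A (fun w => f w % 2 = 1)] at h
  have h1 : (∑ w ∈ A.filter (fun w => f w % 2 = 1), f w % 2)
      = (A.filter fun w => f w % 2 = 1).card := by
    rw [Finset.card_eq_sum_ones]
    exact Finset.sum_congr rfl fun w hw => (Finset.mem_filter.1 hw).2
  have h2 : (∑ w ∈ A.filter (fun w => ¬ f w % 2 = 1), f w % 2) = 0 := by
    refine Finset.sum_eq_zero fun w hw => ?_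
    have := (Finset.mem_filter.1 hw).2
    omega
  omega

/-- Sum of two simplicial cycles is a simplicial cycle. -/
lemma cycle_add {k : ℕ} {A B : Multiset (Finset V)}
    (hA : IsSimplicialCycle k A) (hB : IsSimplicialCycle k B) :
    IsSimplicialCycle k (A + B) := by
  classical
  refine ⟨fun F hF => ?_, fun F hF => ?_⟩
  · rcases Multiset.mem_add.1 hF with h | h
    exacts [hA.1 F h, hB.1 F h]
  · obtain ⟨hc, hodd⟩ := hF
    rw [Multiset.countP_add] at hodd
    have h1 := hA.2 F
    have h2 := hB.2 F
    simp only [inBoundary, not_and] at h1 h2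
    have := h1 hc
    have := h2 hc
    omega


lemma mem_starM_of_mem {S : Multiset (Finset V)} {F : Finset V} {σ : V → V}
    (hF : F ∈ S) : F.image σ ∈ starM σ S :=
  Multiset.mem_map_of_mem _ hF

lemma subset_complexVerts {S : Multiset (Finset V)} {F : Finset V} (hF : F ∈ S) :
    F ⊆ complexVerts S := fun v hv => mem_complexVerts.2 ⟨F, hF, hv⟩

lemma starM_cycle {k : ℕ} {S T : Multiset (Finset V)} {σ : V → V}
    (hσS : starM σ S = S) (hinv : ∀ v ∈ complexVerts S, σ (σ v) = v)
    (hT : T ≤ S) (hc : IsSimplicialCycle k T) : IsSimplicialCycle k (starM σ T) := by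
  classical
  have hiV : ∀ a ∈ complexVerts S, ∀ b ∈ complexVerts S, σ a = σ b → a = b := by
    intro a ha b hb hab
    rw [← hinv a ha, ← hinv b hb, hab]
  have hσV : ∀ v ∈ complexVerts S, σ v ∈ complexVerts S := by
    intro v hv
    obtain ⟨F, hF, hvF⟩ := mem_complexVerts.1 hv
    have : F.image σ ∈ S := by rw [← hσS]; exact mem_starM_of_mem hF
    exact mem_complexVerts.2 ⟨F.image σ, this, Finset.mem_image_of_mem σ hvF⟩
  constructor
  · rintro F' hF'
    obtain ⟨U, hU, rfl⟩ := Multiset.mem_map.1 hF'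
    have hUS : U ∈ S := Multiset.mem_of_le hT hU
    rw [Finset.card_image_of_injOn (fun a ha b hb hab =>
      hiV a (subset_complexVerts hUS ha) b (subset_complexVerts hUS hb) hab)]
    exact hc.1 U hU
  · rintro K ⟨hKc, hodd⟩
    rw [show Multiset.countP (fun U => K ⊆ U) (starM σ T)
        = Multiset.card (T.filter fun U => K ⊆ U.image σ) from
      Multiset.countP_map _ _ _] at hodd
    have hne : (T.filter fun U => K ⊆ U.image σ) ≠ 0 := by
      intro h0; rw [h0] at hodd; simp at hodd
    obtain ⟨U₀, hU₀⟩ := Multiset.exists_mem_of_ne_zero hne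
    have hU₀T : U₀ ∈ T := Multiset.mem_of_mem_filter hU₀
    have hU₀K : K ⊆ U₀.image σ := (Multiset.mem_filter.1 hU₀).2
    have hKV : ∀ v ∈ K, v ∈ complexVerts S := by
      intro v hv
      obtain ⟨u, hu, rfl⟩ := Finset.mem_image.1 (hU₀K hv)
      exact hσV u (subset_complexVerts (Multiset.mem_of_le hT hU₀T) hu)
    have hfe : (T.filter fun U => K ⊆ U.image σ)
        = (T.filter fun U => K.image σ ⊆ U) := by
      refine Multiset.filter_congr fun U hU => ?_
      have hUS : U ∈ S := Multiset.mem_of_le hT hU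
      constructor
      · intro h w hw
        obtain ⟨v, hv, rfl⟩ := Finset.mem_image.1 hw
        obtain ⟨u, hu, huv⟩ := Finset.mem_image.1 (h hv)
        rw [← huv, hinv u (subset_complexVerts hUS hu)]
        exact hu
      · intro h v hv
        have : σ v ∈ U := h (Finset.mem_image_of_mem σ hv)
        rw [← hinv v (hKV v hv)]
        exact Finset.mem_image_of_mem σ this
    rw [hfe, ← Multiset.countP_eq_card_filter] at hodd
    have hKc' : (K.image σ).card = k := by
      rw [Finset.card_image_of_injOn (fun a ha b hb hab =>
        hiV a (hKV a ha) b (hKV b hb) hab)]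
      exact hKc
    have := hc.2 (K.image σ)
    simp only [inBoundary, not_and] at this
    have := this hKc'
    omega

end Stmt11Aux
/-- Small symmetric separators of `ℤ₂`-irreducible `k`-cycles. -/
theorem statement11 {V : Type*} [DecidableEq V] (k : ℕ) (hk : 2 ≤ k)
    (S : Multiset (Finset V)) (σ : V → V) (h : IsZ2IrreducibleCycle k S σ)
    (X : Finset V) (hXsub : ↑X ⊆ (↑(complexVerts S) : Set V)) (hXinv : X.image σ = X)
    (hsep : ¬ ((complexGraph S).induce ((↑(complexVerts S) : Set V) \ ↑X)).Connected)
    (hmin : ∀ Y : Finset V, Y ⊆ X → Y ≠ X → Y.image σ = Y →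
      ((complexGraph S).induce ((↑(complexVerts S) : Set V) \ ↑Y)).Connected)
    (hXcard : X.card ≤ 2 * k) :
    (∃ T : Multiset (Finset V), IsSimplicialCircuit k T ∧ S = T + starM σ T ∧
        complexVerts T ∩ complexVerts (starM σ T) = X) ∨
      (X.card = 2 * k ∧
        Nonempty ((complexGraph S).induce (↑X : Set V) ≃g crossGraph (k - 1))) := by
  classical
  obtain ⟨⟨⟨hMC, hBd⟩, hInvol, hσS, hFree⟩, hS0, hIrr⟩ := h
  -- Basic facts about the involution and vertices
  have hmemV : ∀ F ∈ S, ∀ v ∈ F, v ∈ complexVerts S :=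
    fun F hF v hv => subset_complexVerts hF hv
  have hσV : ∀ v ∈ complexVerts S, σ v ∈ complexVerts S := by
    intro v hv
    obtain ⟨F, hF, hvF⟩ := mem_complexVerts.1 hv
    have : F.image σ ∈ S := by rw [← hσS]; exact mem_starM_of_mem hF
    exact mem_complexVerts.2 ⟨F.image σ, this, Finset.mem_image_of_mem σ hvF⟩
  have hinj : ∀ a ∈ complexVerts S, ∀ b ∈ complexVerts S, σ a = σ b → a = b := by
    intro a ha b hb hab
    rw [← hInvol a ha, ← hInvol b hb, hab]
  have hfreepair : ∀ F ∈ S, ∀ v ∈ F, σ v ∉ F := by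
    intro F hF v hv hcon
    refine hFree {v, σ v} ⟨v, by simp⟩ ⟨F, hF, ?_⟩ ?_
    · intro w hw
      rcases Finset.mem_insert.1 hw with rfl | hw
      · exact hv
      · rw [Finset.mem_singleton.1 hw]; exact hcon
    · rw [Finset.image_insert, Finset.image_singleton, hInvol v (hmemV F hF v hv),
        Finset.pair_comm]
  have hfree1 : ∀ v ∈ complexVerts S, σ v ≠ v := by
    intro v hv hcon
    obtain ⟨F, hF, hvF⟩ := mem_complexVerts.1 hv
    exact hfreepair F hF v hvF (by rw [hcon]; exact hvF)
  have hXcV : ∀ x ∈ X, x ∈ complexVerts S := fun x hx => hXsub (Finset.mem_coe.2 hx)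
  have hXσmem : ∀ x ∈ X, σ x ∈ X := fun x hx => by
    rw [← hXinv]; exact Finset.mem_image_of_mem σ hx
  have hXσmem' : ∀ v ∈ complexVerts S, σ v ∈ X → v ∈ X := by
    intro v hv hσv
    have := hXσmem (σ v) hσv
    rwa [hInvol v hv] at this
  have hFnotX : ∀ F ∈ S, ∃ v ∈ F, v ∉ X := by
    intro F hF
    by_contra hc
    push_neg at hc
    have hFX : F ⊆ X := hc
    have hdisj : Disjoint F (F.image σ) := by
      rw [Finset.disjoint_left]
      rintro w hwF hwI
      obtain ⟨u, hu, rfl⟩ := Finset.mem_image.1 hwI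
      exact hfreepair F hF u hu hwF
    have himg : F.image σ ⊆ X := by
      intro w hw
      obtain ⟨u, hu, rfl⟩ := Finset.mem_image.1 hw
      exact hXσmem u (hFX hu)
    have hcard : (F ∪ F.image σ).card = 2 * (k + 1) := by
      rw [Finset.card_union_of_disjoint hdisj,
        Finset.card_image_of_injOn (fun p hp q hq hpq =>
          hinj p (hmemV F hF p hp) q (hmemV F hF q hq) hpq), hMC F hF]
      ring
    have hle : (F ∪ F.image σ).card ≤ X.card :=
      Finset.card_le_card (Finset.union_subset hFX himg)
    omega
  -- The separated vertex set
  set Vs : Set V := (↑(complexVerts S) : Set V) \ ↑X with hVsdef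
  have hVsmem : ∀ v, v ∈ Vs ↔ v ∈ complexVerts S ∧ v ∉ X := by
    intro v; simp [hVsdef, Set.mem_diff]
  have hVsσ : ∀ v ∈ Vs, σ v ∈ Vs := by
    intro v hv
    rw [hVsmem] at hv ⊢
    exact ⟨hσV v hv.1, fun hc => hv.2 (hXσmem' v hv.1 hc)⟩
  have hVsne : Vs.Nonempty := by
    obtain ⟨F, hF⟩ := Multiset.exists_mem_of_ne_zero hS0
    obtain ⟨v, hvF, hvX⟩ := hFnotX F hF
    exact ⟨v, (hVsmem v).2 ⟨hmemV F hF v hvF, hvX⟩⟩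
  obtain ⟨a, ha, b, hb, hnr⟩ := not_connected_exists hVsne hsep
  -- The component of `a`
  set C : Set V := {w | w ∈ Vs ∧ cgRel S Vs a w} with hCdef
  have hCmem : ∀ w, w ∈ C ↔ w ∈ Vs ∧ cgRel S Vs a w := fun w => Iff.rfl
  have haC : a ∈ C := ⟨ha, cgRel.refl a⟩
  have hCVs : ∀ w ∈ C, w ∈ Vs := fun w hw => hw.1
  have hstepσ : ∀ u v, cgStep S Vs u v → cgStep S Vs (σ u) (σ v) := by
    rintro u v ⟨hu, hv, hadj⟩
    obtain ⟨hne, F, hF, huF, hvF⟩ := complexGraph_adj.1 hadj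
    refine ⟨hVsσ u hu, hVsσ v hv, complexGraph_adj.2 ⟨?_, F.image σ, ?_, ?_, ?_⟩⟩
    · intro hc
      exact hne (hinj u (((hVsmem u).1 hu).1) v (((hVsmem v).1 hv).1) hc)
    · rw [← hσS]; exact mem_starM_of_mem hF
    · exact Finset.mem_image_of_mem σ huF
    · exact Finset.mem_image_of_mem σ hvF
  have hrelσ : ∀ u v, cgRel S Vs u v → cgRel S Vs (σ u) (σ v) :=
    fun u v h => Relation.ReflTransGen.lift σ (fun x y hxy => hstepσ x y hxy) _ _ h
  have hclq : ∀ F ∈ S, ∀ u ∈ F, ∀ v ∈ F, u ∉ X → v ∉ X → cgRel S Vs u v := by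
    intro F hF u hu v hv huX hvX
    by_cases he : u = v
    · exact he ▸ cgRel.refl u
    · exact Relation.ReflTransGen.single
        ⟨(hVsmem u).2 ⟨hmemV F hF u hu, huX⟩, (hVsmem v).2 ⟨hmemV F hF v hv, hvX⟩,
          complexGraph_adj.2 ⟨he, F, hF, hu, hv⟩⟩
  have hcls : ∀ F ∈ S, ∀ u ∈ F, ∀ v ∈ F, u ∈ C → v ∉ X → v ∈ C := by
    intro F hF u hu v hv huC hvX
    have huX : u ∉ X := ((hVsmem u).1 (hCVs u huC)).2
    refine ⟨(hVsmem v).2 ⟨hmemV F hF v hv, hvX⟩, huC.2.trans (hclq F hF u hu v hv huX hvX)⟩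
  -- The submulticomplex induced by the component of `a`
  set T : Multiset (Finset V) := S.filter (fun F => ∃ v ∈ F, v ∈ C) with hTdef
  have hTS : T ≤ S := Multiset.filter_le _ S
  have hTmem : ∀ F, F ∈ T ↔ F ∈ S ∧ ∃ v ∈ F, v ∈ C := fun F => Multiset.mem_filter
  have hTmc : IsMultiComplex k T := fun F hF => hMC F (Multiset.mem_of_le hTS hF)
  have hT0 : T ≠ 0 := by
    obtain ⟨F, hF, haF⟩ := mem_complexVerts.1 ((hVsmem a).1 ha).1
    have : F ∈ T := (hTmem F).2 ⟨hF, a, haF, haC⟩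
    exact fun h0 => by simp [h0] at this
  have hbC : b ∉ C := fun hc => hnr hc.2
  have hTneS : T ≠ S := by
    obtain ⟨F, hF, hbF⟩ := mem_complexVerts.1 ((hVsmem b).1 hb).1
    have hFT : F ∉ T := by
      intro hFT
      obtain ⟨-, v, hvF, hvC⟩ := (hTmem F).1 hFT
      exact hbC (hcls F hF v hvF b hbF hvC ((hVsmem b).1 hb).2)
    intro he
    exact hFT (he ▸ hF)
  -- Boundary faces of `T` lie in `X`
  have hbdX : ∀ K, inBoundary k T K → K ⊆ X ∧ ∃ U ∈ S, K ⊆ U := by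
    rintro K ⟨hKc, hodd⟩
    have hpos : 0 < Multiset.countP (fun U => K ⊆ U) T := by
      rcases Nat.eq_zero_or_pos (Multiset.countP (fun U => K ⊆ U) T) with h0 | h
      · omega
      · exact h
    obtain ⟨U, hUT, hKU⟩ := Multiset.countP_pos.1 hpos
    have hUS : U ∈ S := Multiset.mem_of_le hTS hUT
    refine ⟨?_, U, hUS, hKU⟩
    intro x hxK
    by_contra hxX
    have hxV : x ∈ complexVerts S := hmemV U hUS x (hKU hxK)
    by_cases hxC : x ∈ C
    · have heq : Multiset.countP (fun U => K ⊆ U) T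
          = Multiset.countP (fun U => K ⊆ U) S := by
        rw [hTdef, Multiset.countP_filter]
        refine Multiset.countP_congr rfl fun U' hU' => ?_
        simp only [eq_iff_iff]
        constructor
        · exact fun h => h.1
        · exact fun h => ⟨h, x, h hxK, hxC⟩
      have := hBd K
      simp only [inBoundary, not_and] at this
      have := this hKc
      rw [heq] at hodd
      omega
    · have heq : Multiset.countP (fun U => K ⊆ U) T = 0 := by
        rw [Multiset.countP_eq_zero]
        intro U' hU'T hKU'
        obtain ⟨hU'S, v, hvU', hvC⟩ := (hTmem U').1 hU'T
        exact hxC (hcls U' hU'S v hvU' x (hKU' hxK) hvC hxX)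
      omega
  by_cases hTb : ∀ K : Finset V, ¬ inBoundary k T K
  · -- Branch 1: `T` has empty boundary, conclusion 1
    have hTcyc : IsSimplicialCycle k T := ⟨hTmc, hTb⟩
    have haV : a ∈ complexVerts S := ((hVsmem a).1 ha).1
    have haX : a ∉ X := ((hVsmem a).1 ha).2
    have hσaVs : σ a ∈ Vs := hVsσ a ha
    -- the mirror component
    set D : Set V := {w | w ∈ Vs ∧ cgRel S Vs (σ a) w} with hDdef
    have hCD : ∀ v ∈ complexVerts S, (σ v ∈ C ↔ v ∈ D) := by
      intro v hv
      constructor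
      · rintro ⟨h1, h2⟩
        have h3 := hrelσ a (σ v) h2
        rw [hInvol v hv] at h3
        have h4 := hVsσ (σ v) h1
        rw [hInvol v hv] at h4
        exact ⟨h4, h3⟩
      · rintro ⟨h1, h2⟩
        have h3 := hrelσ (σ a) v h2
        rw [hInvol a haV] at h3
        exact ⟨hVsσ v h1, h3⟩
    set T' : Multiset (Finset V) := S.filter (fun F => ∃ v ∈ F, v ∈ D) with hT'def
    have hT'S : T' ≤ S := Multiset.filter_le _ S
    have hT'mem : ∀ F, F ∈ T' ↔ F ∈ S ∧ ∃ v ∈ F, v ∈ D := fun F => Multiset.mem_filter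
    have himginv : ∀ F ∈ S, Finset.image σ (Finset.image σ F) = F := by
      intro F hF
      rw [Finset.image_image]
      refine (Finset.image_congr (g := id) (fun x hx => hInvol x (hmemV F hF x hx))).trans
        Finset.image_id
    have hmapinv : ∀ U : Multiset (Finset V), U ≤ S →
        Multiset.map (Finset.image σ) (Multiset.map (Finset.image σ) U) = U := by
      intro U hU
      rw [Multiset.map_map]
      exact (Multiset.map_congr rfl fun F hF =>
        himginv F (Multiset.mem_of_le hU hF)).trans (Multiset.map_id U)
    have hstar : starM σ T = T' := by
      have hfm := Multiset.filter_map (p := fun F => ∃ v ∈ F, v ∈ C) (Finset.image σ) S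
      rw [show Multiset.map (Finset.image σ) S = S from hσS] at hfm
      have hcg : Multiset.filter ((fun F => ∃ v ∈ F, v ∈ C) ∘ Finset.image σ) S
          = Multiset.filter (fun F => ∃ v ∈ F, v ∈ D) S := by
        refine Multiset.filter_congr fun F hF => ?_
        simp only [Function.comp]
        constructor
        · rintro ⟨w, hw, hwC⟩
          obtain ⟨v, hv, rfl⟩ := Finset.mem_image.1 hw
          exact ⟨v, hv, (hCD v (hmemV F hF v hv)).1 hwC⟩
        · rintro ⟨v, hv, hvD⟩
          exact ⟨σ v, Finset.mem_image_of_mem σ hv, (hCD v (hmemV F hF v hv)).2 hvD⟩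
      rw [hcg, ← hT'def, ← hTdef] at hfm
      -- hfm : T = map (image σ) T'
      calc starM σ T
          = Multiset.map (Finset.image σ) (Multiset.map (Finset.image σ) T') := by
            rw [hfm]; rfl
        _ = T' := hmapinv T' hT'S
    by_cases hCC : σ a ∈ C
    · -- then `T` is σ-invariant, contradicting irreducibility
      exfalso
      have hDC : ∀ w, w ∈ D ↔ w ∈ C := by
        intro w
        constructor
        · rintro ⟨h1, h2⟩; exact ⟨h1, hCC.2.trans h2⟩
        · rintro ⟨h1, h2⟩; exact ⟨h1, (hCC.2.symm).trans h2⟩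
      have hT'T : T' = T := by
        rw [hT'def, hTdef]
        refine Multiset.filter_congr fun F _ => ?_
        constructor
        · rintro ⟨v, hv, hvD⟩; exact ⟨v, hv, (hDC v).1 hvD⟩
        · rintro ⟨v, hv, hvC⟩; exact ⟨v, hv, (hDC v).2 hvC⟩
      exact hIrr T hTS hT0 hTneS (hstar.trans hT'T) hTcyc
    · -- the two mirror pieces are disjoint and sum to `S`
      have hCDdisj : ∀ w, w ∈ C → w ∈ D → False := by
        rintro w ⟨h1, h2⟩ ⟨h3, h4⟩
        exact hCC ⟨hσaVs, h2.trans h4.symm⟩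
      have hDVs : ∀ w ∈ D, w ∈ Vs := fun w hw => hw.1
      have hclsD : ∀ F ∈ S, ∀ u ∈ F, ∀ v ∈ F, u ∈ D → v ∉ X → v ∈ D := by
        intro F hF u hu v hv huD hvX
        have huX : u ∉ X := ((hVsmem u).1 (hDVs u huD)).2
        exact ⟨(hVsmem v).2 ⟨hmemV F hF v hv, hvX⟩,
          huD.2.trans (hclq F hF u hu v hv huX hvX)⟩
      have hexcl : ∀ F ∈ S, ¬((∃ v ∈ F, v ∈ C) ∧ (∃ v ∈ F, v ∈ D)) := by
        rintro F hF ⟨⟨v, hv, hvC⟩, ⟨w, hw, hwD⟩⟩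
        have hwX : w ∉ X := ((hVsmem w).1 (hDVs w hwD)).2
        exact hCDdisj w (hcls F hF v hv w hw hvC hwX) hwD
      have hTT'sum : T + T' = S.filter
          (fun F => (∃ v ∈ F, v ∈ C) ∨ (∃ v ∈ F, v ∈ D)) := by
        rw [hTdef, hT'def, Multiset.filter_add_filter,
          Multiset.filter_eq_nil.2 (fun F hF => hexcl F hF), add_zero]
      have hsum_le : T + T' ≤ S := hTT'sum ▸ Multiset.filter_le _ S
      have hsum0 : T + T' ≠ 0 := by
        obtain ⟨F, hF⟩ := Multiset.exists_mem_of_ne_zero hT0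
        have : F ∈ T + T' := Multiset.mem_add.2 (Or.inl hF)
        exact fun h0 => by simp [h0] at this
      have hstar' : starM σ T' = T := by
        rw [← hstar]; exact hmapinv T hTS
      have hsuminv : starM σ (T + T') = T + T' := by
        calc starM σ (T + T') = starM σ T + starM σ T' := Multiset.map_add _ _ _
          _ = T' + T := by rw [hstar, hstar']
          _ = T + T' := add_comm _ _
      have hsumcyc : IsSimplicialCycle k (T + T') :=
        cycle_add hTcyc (hstar ▸ starM_cycle hσS hInvol hTS hTcyc)
      have hST : S = T + T' := by
        by_contra hne
        exact hIrr (T + T') hsum_le hsum0 (fun h => hne h.symm) hsuminv hsumcyc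
      -- `T` is a circuit
      have hcirc : IsSimplicialCircuit k T := by
        refine ⟨hTcyc, hT0, ?_⟩
        intro T₀ hle hne0 hneT hcyc0
        have hT₀S : T₀ ≤ S := hle.trans hTS
        set U : Multiset (Finset V) := T₀ + starM σ T₀ with hUdef
        have hUle : U ≤ S := by
          rw [hST]
          refine Multiset.le_iff_count.2 fun F => ?_
          rw [Multiset.count_add, Multiset.count_add]
          have h1 : T₀.count F ≤ T.count F := Multiset.count_le_of_le F hle
          have h2 : (starM σ T₀).count F ≤ T'.count F := by
            rw [← hstar]
            exact Multiset.count_le_of_le F (Multiset.map_le_map hle)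
          omega
        have hU0 : U ≠ 0 := by
          obtain ⟨F, hF⟩ := Multiset.exists_mem_of_ne_zero hne0
          have : F ∈ U := Multiset.mem_add.2 (Or.inl hF)
          exact fun h0 => by simp [h0] at this
        have hUinv : starM σ U = U := by
          rw [hUdef]
          calc starM σ (T₀ + starM σ T₀)
              = starM σ T₀ + starM σ (starM σ T₀) := Multiset.map_add _ _ _
            _ = starM σ T₀ + T₀ := by
                rw [show starM σ (starM σ T₀) = T₀ from hmapinv T₀ hT₀S]
            _ = T₀ + starM σ T₀ := add_comm _ _
        have hUcyc : IsSimplicialCycle k U :=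
          cycle_add hcyc0 (starM_cycle hσS hInvol hT₀S hcyc0)
        have hUneS : U ≠ S := by
          intro he
          have hc1 : Multiset.card T' = Multiset.card T := by
            rw [← hstar]; exact Multiset.card_map _ _
          have hc2 : Multiset.card U = 2 * Multiset.card T₀ := by
            rw [hUdef, Multiset.card_add,
              show Multiset.card (starM σ T₀) = Multiset.card T₀ from
                Multiset.card_map _ _]
            ring
          have hc3 : Multiset.card S = Multiset.card T + Multiset.card T' := by
            rw [hST, Multiset.card_add]
          have hlt : Multiset.card T₀ < Multiset.card T :=
            Multiset.card_lt_card (hle.lt_of_ne hneT)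
          rw [he] at hc2
          omega
        exact hIrr U hUle hU0 hUneS hUinv hUcyc
      -- vertex sets intersect exactly in `X`
      have hVT' : ∀ x ∈ complexVerts S, (x ∈ complexVerts T' ↔ σ x ∈ complexVerts T) := by
        intro x hx
        rw [← hstar]
        constructor
        · intro hxV
          obtain ⟨F', hF', hxF'⟩ := mem_complexVerts.1 hxV
          obtain ⟨F, hFT, rfl⟩ := Multiset.mem_map.1 hF'
          obtain ⟨w, hw, rfl⟩ := Finset.mem_image.1 hxF'
          have hwV : w ∈ complexVerts S :=
            hmemV F (Multiset.mem_of_le hTS hFT) w hw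
          rw [hInvol w hwV]
          exact mem_complexVerts.2 ⟨F, hFT, hw⟩
        · intro hσx
          obtain ⟨F, hFT, hσxF⟩ := mem_complexVerts.1 hσx
          refine mem_complexVerts.2 ⟨F.image σ, Multiset.mem_map_of_mem _ hFT, ?_⟩
          rw [← hInvol x hx]
          exact Finset.mem_image_of_mem σ hσxF
      -- both claims, using minimality of `X`
      have hXboth : ∀ x ∈ X, x ∈ complexVerts T ∧ x ∈ complexVerts T' := by
        intro x hxX
        have hxcV : x ∈ complexVerts S := hXcV x hxX
        have hσxX : σ x ∈ X := hXσmem x hxX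
        have hσxcV : σ x ∈ complexVerts S := hXcV _ hσxX
        -- shared: the minimal separator machinery
        set Y : Finset V := X \ {x, σ x} with hYdef
        have hYX : Y ⊆ X := Finset.sdiff_subset
        have hYne : Y ≠ X := by
          intro he
          have : x ∈ Y := he.symm ▸ hxX
          simp [hYdef] at this
        have hYinv : Y.image σ = Y := by
          ext w
          simp only [hYdef, Finset.mem_image, Finset.mem_sdiff, Finset.mem_insert,
            Finset.mem_singleton]
          constructor
          · rintro ⟨y, ⟨hyX, hy2⟩, rfl⟩
            push_neg at hy2
            refine ⟨hXσmem y hyX, ?_⟩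
            push_neg
            constructor
            · intro hc
              exact hy2.2 (by rw [← hInvol y (hXcV y hyX), hc])
            · intro hc
              exact hy2.1 (hinj y (hXcV y hyX) x hxcV hc)
          · rintro ⟨hwX, hw2⟩
            push_neg at hw2
            refine ⟨σ w, ⟨hXσmem w hwX, ?_⟩, hInvol w (hXcV w hwX)⟩
            push_neg
            constructor
            · intro hc
              exact hw2.2 (by rw [← hInvol w (hXcV w hwX), hc])
            · intro hc
              exact hw2.1 (hinj w (hXcV w hwX) x hxcV hc)
        have hconn := hmin Y hYX hYne hYinv
        set W' : Set V := (↑(complexVerts S) : Set V) \ ↑Y with hW'def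
        have hW'mem : ∀ v, v ∈ W' ↔ v ∈ complexVerts S ∧ v ∉ Y := by
          intro v; simp [hW'def, Set.mem_diff]
        have haW' : a ∈ W' := (hW'mem a).2 ⟨haV, fun hc => haX (hYX hc)⟩
        have hσaW' : σ a ∈ W' := (hW'mem (σ a)).2
          ⟨hσV a haV, fun hc => ((hVsmem (σ a)).1 hσaVs).2 (hYX hc)⟩
        have hrelW : cgRel S W' a (σ a) := connected_cgRel hconn haW' hσaW'
        have hvWcases : ∀ v ∈ W', v ∉ X → v ∈ Vs := by
          intro v hv hvX
          exact (hVsmem v).2 ⟨((hW'mem v).1 hv).1, hvX⟩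
        have hvWX : ∀ v ∈ W', v ∈ X → v = x ∨ v = σ x := by
          intro v hv hvX
          have := ((hW'mem v).1 hv).2
          simp only [hYdef, Finset.mem_sdiff, Finset.mem_insert, Finset.mem_singleton,
            not_and, not_not] at this
          have := this hvX
          tauto
        constructor
        · -- x ∈ complexVerts T
          by_contra hxT
          have hσxT' : σ x ∉ complexVerts T' := by
            intro hc
            have := (hVT' (σ x) hσxcV).1 hc
            rw [hInvol x hxcV] at this
            exact hxT this
          have hPinv : ∀ u v, cgStep S W' u v → u ∈ C ∨ u = σ x → v ∈ C ∨ v = σ x := by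
            rintro u v ⟨huW, hvW, hadj⟩ hu
            obtain ⟨hne, F, hFS, huF, hvF⟩ := complexGraph_adj.1 hadj
            have hFT : F ∈ T := by
              rcases hu with huC | rfl
              · exact (hTmem F).2 ⟨hFS, u, huF, huC⟩
              · rcases Multiset.mem_add.1 (hST ▸ hFS) with hT1 | hT1
                · exact hT1
                · exact absurd (mem_complexVerts.2 ⟨F, (hT'def ▸ hT1 : F ∈ T'), huF⟩) hσxT'
            by_cases hvX : v ∈ X
            · rcases hvWX v hvW hvX with rfl | rfl
              · exact absurd (mem_complexVerts.2 ⟨F, hFT, hvF⟩) hxT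
              · exact Or.inr rfl
            · obtain ⟨w, hwF, hwC⟩ := ((hTmem F).1 hFT).2
              exact Or.inl (hcls F hFS w hwF v hvF hwC hvX)
          have hfin : ∀ c, cgRel S W' a c → c ∈ C ∨ c = σ x := by
            intro c hc
            induction hc with
            | refl => exact Or.inl haC
            | tail h1 h2 ih => exact hPinv _ _ h2 ih
          rcases hfin (σ a) hrelW with hc | hc
          · exact hCC hc
          · exact ((hVsmem (σ a)).1 hσaVs).2 (hc ▸ hσxX)
        · -- x ∈ complexVerts T'
          by_contra hxT'
          have hσxT : σ x ∉ complexVerts T := by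
            intro hc
            exact hxT' ((hVT' x hxcV).2 hc)
          have hPinv : ∀ u v, cgStep S W' u v → u ∈ C ∨ u = x → v ∈ C ∨ v = x := by
            rintro u v ⟨huW, hvW, hadj⟩ hu
            obtain ⟨hne, F, hFS, huF, hvF⟩ := complexGraph_adj.1 hadj
            have hFT : F ∈ T := by
              rcases hu with huC | rfl
              · exact (hTmem F).2 ⟨hFS, u, huF, huC⟩
              · rcases Multiset.mem_add.1 (hST ▸ hFS) with hT1 | hT1
                · exact hT1
                · exact absurd (mem_complexVerts.2 ⟨F, (hT'def ▸ hT1 : F ∈ T'), huF⟩) hxT'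
            by_cases hvX : v ∈ X
            · rcases hvWX v hvW hvX with rfl | rfl
              · exact Or.inr rfl
              · exact absurd (mem_complexVerts.2 ⟨F, hFT, hvF⟩) hσxT
            · obtain ⟨w, hwF, hwC⟩ := ((hTmem F).1 hFT).2
              exact Or.inl (hcls F hFS w hwF v hvF hwC hvX)
          have hfin : ∀ c, cgRel S W' a c → c ∈ C ∨ c = x := by
            intro c hc
            induction hc with
            | refl => exact Or.inl haC
            | tail h1 h2 ih => exact hPinv _ _ h2 ih
          rcases hfin (σ a) hrelW with hc | hc
          · exact hCC hc
          · exact ((hVsmem (σ a)).1 hσaVs).2 (hc ▸ hxX)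
      refine Or.inl ⟨T, hcirc, by rw [hstar]; exact hST, ?_⟩
      rw [hstar]
      ext w
      simp only [Finset.mem_inter]
      constructor
      · rintro ⟨h1, h2⟩
        by_contra hwX
        obtain ⟨F, hFT, hwF⟩ := mem_complexVerts.1 h1
        obtain ⟨F', hF'T, hwF'⟩ := mem_complexVerts.1 h2
        obtain ⟨hFS, v, hvF, hvC⟩ := (hTmem F).1 hFT
        obtain ⟨hF'S, v', hv'F', hv'D⟩ := (hT'mem F').1 hF'T
        exact hCDdisj w (hcls F hFS v hvF w hwF hvC hwX)
          (hclsD F' hF'S v' hv'F' w hwF' hv'D hwX)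
      · intro hwX
        exact hXboth w hwX

  · -- Branch 2: `T` has a boundary face, conclusion 2
    push_neg at hTb
    obtain ⟨K₀, hK₀⟩ := hTb
    -- structure of boundary faces
    have hbds : ∀ K, inBoundary k T K →
        K ⊆ X ∧ (∃ U ∈ S, K ⊆ U) ∧ Disjoint K (K.image σ) ∧
          K ∪ K.image σ = X ∧ X.card = 2 * k := by
      intro K hK
      obtain ⟨hKX, U, hUS, hKU⟩ := hbdX K hK
      have hKc : K.card = k := hK.1
      have hdisj : Disjoint K (K.image σ) := by
        rw [Finset.disjoint_left]
        rintro w hwK hwI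
        obtain ⟨y, hy, rfl⟩ := Finset.mem_image.1 hwI
        exact hfreepair U hUS y (hKU hy) (hKU hwK)
      have himgX : K.image σ ⊆ X := by
        intro w hw
        obtain ⟨y, hy, rfl⟩ := Finset.mem_image.1 hw
        exact hXσmem y (hKX hy)
      have hcard : (K ∪ K.image σ).card = 2 * k := by
        rw [Finset.card_union_of_disjoint hdisj, Finset.card_image_of_injOn
          (fun p hp q hq hpq =>
            hinj p (hmemV U hUS p (hKU hp)) q (hmemV U hUS q (hKU hq)) hpq), hKc]
        ring
      have hUX : K ∪ K.image σ = X :=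
        Finset.eq_of_subset_of_card_le (Finset.union_subset hKX himgX)
          (by rw [hcard]; exact hXcard)
      exact ⟨hKX, ⟨U, hUS, hKU⟩, hdisj, hUX, by rw [← hUX]; exact hcard.symm ▸ rfl⟩
    have hX2k : X.card = 2 * k := (hbds K₀ hK₀).2.2.2.2
    -- the flip operation on boundary faces
    have hflip : ∀ K, inBoundary k T K → ∀ u ∈ K,
        inBoundary k T (insert (σ u) (K.erase u)) := by
      intro K hK u huK
      obtain ⟨hKX, ⟨U, hUS, hKU⟩, hdisjK, hUXK, -⟩ := hbds K hK
      have hKc : K.card = k := hK.1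
      set J : Finset V := K.erase u with hJdef
      have hJcard : J.card = k - 1 := by
        rw [hJdef, Finset.card_erase_of_mem huK, hKc]
      have hucV : u ∈ complexVerts S := hmemV U hUS u (hKU huK)
      have hpar := parity_sum (A := complexVerts S) (J := J) (T := T)
        (fun U' hU' => ⟨subset_complexVerts (Multiset.mem_of_le hTS hU'),
          fun hJU => by
            rw [Finset.card_sdiff_of_subset hJU, hMC U' (Multiset.mem_of_le hTS hU'), hJcard]
            omega⟩)
      have hodds := card_odd_even (A := complexVerts S \ J)
        (f := fun w => Multiset.countP (fun U' => insert w J ⊆ U') T) hpar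
      set O : Finset V := (complexVerts S \ J).filter
        (fun w => Multiset.countP (fun U' => insert w J ⊆ U') T % 2 = 1) with hOdef
      have huO : u ∈ O := by
        rw [hOdef, Finset.mem_filter, Finset.mem_sdiff]
        refine ⟨⟨hucV, Finset.notMem_erase u K⟩, ?_⟩
        rw [hJdef, Finset.insert_erase huK]
        exact hK.2
      have hOsub : O ⊆ {u, σ u} := by
        intro w hw
        rw [hOdef, Finset.mem_filter, Finset.mem_sdiff] at hw
        obtain ⟨⟨hwcV, hwJ⟩, hwodd⟩ := hw
        have hKw : inBoundary k T (insert w J) := by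
          refine ⟨?_, hwodd⟩
          rw [Finset.card_insert_of_notMem hwJ, hJcard]
          omega
        obtain ⟨hKwX, ⟨U', hU'S, hKwU'⟩, -, -, -⟩ := hbds _ hKw
        have hwX : w ∈ X := hKwX (Finset.mem_insert_self w J)
        have hwσJ : ∀ j ∈ J, w ≠ σ j := by
          rintro j hj rfl
          exact hfreepair U' hU'S j (hKwU' (Finset.mem_insert_of_mem hj))
            (hKwU' (Finset.mem_insert_self _ _))
        have hKJ : K = insert u J := by rw [hJdef, Finset.insert_erase huK]
        rw [← hUXK, hKJ] at hwX
        rcases Finset.mem_union.1 hwX with h | h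
        · rcases Finset.mem_insert.1 h with rfl | h
          · exact Finset.mem_insert_self _ _
          · exact absurd h hwJ
        · rw [Finset.image_insert] at h
          rcases Finset.mem_insert.1 h with rfl | h
          · exact Finset.mem_insert_of_mem (Finset.mem_singleton_self _)
          · obtain ⟨j, hj, rfl⟩ := Finset.mem_image.1 h
            exact absurd rfl (hwσJ j hj)
      have hσu_ne : σ u ≠ u := hfree1 u hucV
      have hcard2 : ({u, σ u} : Finset V).card = 2 := by
        rw [Finset.card_insert_of_notMem (by simp [Ne.symm hσu_ne]),
          Finset.card_singleton]
      have hOcard : O.card = 2 := by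
        have h1 : 0 < O.card := Finset.card_pos.2 ⟨u, huO⟩
        have h2 : O.card ≤ 2 := hcard2 ▸ Finset.card_le_card hOsub
        omega
      have hOeq : O = {u, σ u} :=
        Finset.eq_of_subset_of_card_le hOsub (by rw [hOcard, hcard2])
      have hσuO : σ u ∈ O := hOeq ▸ Finset.mem_insert_of_mem (Finset.mem_singleton_self _)
      rw [hOdef, Finset.mem_filter, Finset.mem_sdiff] at hσuO
      refine ⟨?_, hσuO.2⟩
      rw [Finset.card_insert_of_notMem hσuO.1.2, hJcard]
      omega
    -- all non-antipodal pairs in `X` are adjacent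
    have hadjX : ∀ x ∈ X, ∀ y ∈ X, y ≠ x → y ≠ σ x → (complexGraph S).Adj x y := by
      intro x hx y hy hyx hyσx
      have hxcV := hXcV x hx
      have hycV := hXcV y hy
      obtain ⟨K₁, hK₁, hxK₁⟩ : ∃ K₁, inBoundary k T K₁ ∧ x ∈ K₁ := by
        by_cases hc : x ∈ K₀
        · exact ⟨K₀, hK₀, hc⟩
        · obtain ⟨hKX, ⟨U, hUS, hKU⟩, hdisj, hUX, -⟩ := hbds K₀ hK₀
          have hxK : x ∈ K₀.image σ := by
            have := hx
            rw [← hUX] at this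
            rcases Finset.mem_union.1 this with h | h
            · exact absurd h hc
            · exact h
          obtain ⟨v, hv, hvx⟩ := Finset.mem_image.1 hxK
          have hσx : σ x ∈ K₀ := by
            rw [← hvx, hInvol v (hmemV U hUS v (hKU hv))]
            exact hv
          have hfl := hflip K₀ hK₀ (σ x) hσx
          rw [hInvol x hxcV] at hfl
          exact ⟨_, hfl, Finset.mem_insert_self _ _⟩
      by_cases hc : y ∈ K₁
      · obtain ⟨-, ⟨U, hUS, hKU⟩, -, -, -⟩ := hbds K₁ hK₁
        exact complexGraph_adj.2 ⟨fun h => hyx h.symm, U, hUS, hKU hxK₁, hKU hc⟩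
      · obtain ⟨hKX, ⟨U', hU'S, hKU'⟩, hdisj, hUX, -⟩ := hbds K₁ hK₁
        have hσy : σ y ∈ K₁ := by
          have := hy
          rw [← hUX] at this
          rcases Finset.mem_union.1 this with h | h
          · exact absurd h hc
          · obtain ⟨v, hv, hvy⟩ := Finset.mem_image.1 h
            rw [← hvy, hInvol v (hmemV U' hU'S v (hKU' hv))]
            exact hv
        have hxne : x ≠ σ y := by
          intro hcon
          apply hyσx
          rw [hcon, hInvol y hycV]
        have hfl := hflip K₁ hK₁ (σ y) hσy
        rw [hInvol y hycV] at hfl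
        obtain ⟨-, ⟨U, hUS, hKU⟩, -, -, -⟩ := hbds _ hfl
        refine complexGraph_adj.2 ⟨fun h => hyx h.symm, U, hUS, ?_, ?_⟩
        · exact hKU (Finset.mem_insert_of_mem (Finset.mem_erase.2 ⟨hxne, hxK₁⟩))
        · exact hKU (Finset.mem_insert_self _ _)
    -- build the graph isomorphism
    refine Or.inr ⟨hX2k, ?_⟩
    obtain ⟨hK₀X, ⟨U₀, hU₀S, hK₀U₀⟩, hdisj₀, hUX₀, -⟩ := hbds K₀ hK₀
    have hK₀c : K₀.card = k := hK₀.1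
    have hK₀cV : ∀ w ∈ K₀, w ∈ complexVerts S := fun w hw => hmemV U₀ hU₀S w (hK₀U₀ hw)
    have e : Fin (k - 1 + 1) ≃ {w // w ∈ K₀} :=
      (Fintype.equivFinOfCardEq (by rw [Fintype.card_coe, hK₀c]; omega)).symm
    have hememX : ∀ i : Fin (k - 1 + 1), ((e i : V) ∈ (↑X : Set V)) :=
      fun i => Finset.mem_coe.2 (hK₀X (e i).2)
    have hememXσ : ∀ i : Fin (k - 1 + 1), (σ (e i : V) ∈ (↑X : Set V)) :=
      fun i => Finset.mem_coe.2 (hXσmem _ (hK₀X (e i).2))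
    have h10 : (1 : Fin 2) ≠ 0 := by decide
    set φ : Fin (k - 1 + 1) × Fin 2 → {w : V // w ∈ (↑X : Set V)} := fun p =>
      ⟨if p.2 = 0 then (e p.1 : V) else σ (e p.1 : V), by
        split
        · exact hememX p.1
        · exact hememXσ p.1⟩ with hφdef
    have hfin2 : ∀ t : Fin 2, t = 0 ∨ t = 1 := by decide
    have hφ0 : ∀ p : Fin (k - 1 + 1) × Fin 2, p.2 = 0 → (φ p : V) = (e p.1 : V) := by
      intro p hp
      simp only [hφdef, hp, if_pos]
    have hφ1 : ∀ p : Fin (k - 1 + 1) × Fin 2, p.2 = 1 → (φ p : V) = σ (e p.1 : V) := by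
      intro p hp
      simp only [hφdef, hp, if_neg h10]
    have hKnotimg : ∀ w ∈ K₀, ∀ w' ∈ K₀, w ≠ σ w' := by
      rintro w hw w' hw' rfl
      exact Finset.disjoint_left.1 hdisj₀ hw (Finset.mem_image_of_mem σ hw')
    have hKinj : ∀ i j : Fin (k - 1 + 1), (e i : V) = (e j : V) → i = j := by
      intro i j hij
      exact e.injective (Subtype.ext hij)
    have hφinj : Function.Injective φ := by
      intro p q hpq
      have hval : (φ p : V) = (φ q : V) := congrArg Subtype.val hpq
      rcases hfin2 p.2 with hp2 | hp2 <;> rcases hfin2 q.2 with hq2 | hq2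
      · rw [hφ0 p hp2, hφ0 q hq2] at hval
        exact Prod.ext (hKinj _ _ hval) (hp2.trans hq2.symm)
      · rw [hφ0 p hp2, hφ1 q hq2] at hval
        exact absurd hval (hKnotimg _ (e p.1).2 _ (e q.1).2)
      · rw [hφ1 p hp2, hφ0 q hq2] at hval
        exact absurd hval.symm (hKnotimg _ (e q.1).2 _ (e p.1).2)
      · rw [hφ1 p hp2, hφ1 q hq2] at hval
        have := hinj _ (hK₀cV _ (e p.1).2) _ (hK₀cV _ (e q.1).2) hval
        exact Prod.ext (hKinj _ _ this) (hp2.trans hq2.symm)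
    have hφsurj : Function.Surjective φ := by
      rintro ⟨w, hw⟩
      have hwX : w ∈ X := Finset.mem_coe.1 hw
      rw [← hUX₀] at hwX
      rcases Finset.mem_union.1 hwX with hmem | hmem
      · refine ⟨(e.symm ⟨w, hmem⟩, 0), Subtype.ext ?_⟩
        rw [hφ0 _ rfl]
        simp
      · obtain ⟨v, hv, rfl⟩ := Finset.mem_image.1 hmem
        refine ⟨(e.symm ⟨v, hv⟩, 1), Subtype.ext ?_⟩
        rw [hφ1 _ rfl]
        simp
    have hcross : ∀ p q : Fin (k - 1 + 1) × Fin 2,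
        (crossGraph (k - 1)).Adj p q ↔ p.1 ≠ q.1 := by
      intro p q
      rw [crossGraph, SimpleGraph.fromRel_adj]
      constructor
      · rintro ⟨-, hne | hne⟩
        · exact hne
        · exact Ne.symm hne
      · intro hne
        exact ⟨fun hc => hne (congrArg Prod.fst hc), Or.inl hne⟩
    have hmain : ∀ p q, ((complexGraph S).induce (↑X : Set V)).Adj (φ p) (φ q)
        ↔ p.1 ≠ q.1 := by
      intro p q
      have hvneiff : (e p.1 : V) ≠ (e q.1 : V) ↔ p.1 ≠ q.1 :=
        ⟨fun h hc => h (congrArg (fun i => (e i : V)) hc), fun h hc => h (hKinj _ _ hc)⟩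
      have hp1V : (e p.1 : V) ∈ complexVerts S := hK₀cV _ (e p.1).2
      have hq1V : (e q.1 : V) ∈ complexVerts S := hK₀cV _ (e q.1).2
      have hσσp : σ (σ (e p.1 : V)) = (e p.1 : V) := hInvol _ hp1V
      have hite0 : ∀ x y : V, (if (0 : Fin 2) = 0 then x else y) = x :=
        fun x y => if_pos rfl
      have hite1 : ∀ x y : V, (if (1 : Fin 2) = 0 then x else y) = y :=
        fun x y => if_neg h10
      rw [SimpleGraph.comap_adj]
      simp only [Function.Embedding.coe_subtype]
      constructor
      · intro hadj hpq
        obtain ⟨hxy, F, hFS, hxF, hyF⟩ := complexGraph_adj.1 hadj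
        rcases hfin2 p.2 with hp2 | hp2 <;> rcases hfin2 q.2 with hq2 | hq2 <;>
          simp only [hφdef, hp2, hq2, hite0, hite1] at hxy hxF hyF
        · rw [hpq] at hxy; exact hxy rfl
        · rw [hpq] at hxF; exact hfreepair F hFS _ hxF hyF
        · rw [hpq] at hxF; exact hfreepair F hFS _ hyF hxF
        · rw [hpq] at hxy; exact hxy rfl
      · intro hne
        have hvne : (e p.1 : V) ≠ (e q.1 : V) := hvneiff.2 hne
        rcases hfin2 p.2 with hp2 | hp2 <;> rcases hfin2 q.2 with hq2 | hq2 <;>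
          simp only [hφdef, hp2, hq2, hite0, hite1]
        · exact hadjX _ (hK₀X (e p.1).2) _ (hK₀X (e q.1).2) hvne.symm
            (hKnotimg _ (e q.1).2 _ (e p.1).2)
        · exact hadjX _ (hK₀X (e p.1).2) _ (hXσmem _ (hK₀X (e q.1).2))
            (fun hc => hKnotimg _ (e p.1).2 _ (e q.1).2 hc.symm)
            (fun hc => hvne (hinj _ hq1V _ hp1V hc).symm)
        · exact hadjX _ (hXσmem _ (hK₀X (e p.1).2)) _ (hK₀X (e q.1).2)
            (hKnotimg _ (e q.1).2 _ (e p.1).2)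
            (fun hc => hvne (by rw [hσσp] at hc; exact hc.symm))
        · exact hadjX _ (hXσmem _ (hK₀X (e p.1).2)) _ (hXσmem _ (hK₀X (e q.1).2))
            (fun hc => hvne (hinj _ hq1V _ hp1V hc).symm)
            (fun hc => hKnotimg _ (e p.1).2 _ (e q.1).2
              (by rw [hσσp] at hc; exact hc.symm))
    exact ⟨SimpleGraph.Iso.symm
      ⟨Equiv.ofBijective φ ⟨hφinj, hφsurj⟩,
        fun {p q} => (hmain p q).trans (hcross p q).symm⟩⟩
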